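/- (Positivity of the trace of the matrix product associated to the standard M-path of a one-sided closed curve; matrix core of the positivity of the Laurent expansion χ.) Let F be a linearly ordered field, let n ≥ 0, and let M₁, …, Mₙ be 2×2 matrices over F, each of which is either upper triangular or lower triangular, has all entries nonnegative, and has both diagonal entries strictly positive. Let A = !![p, q; r, 0] with p, q, r > 0. Then tr(A · Mₙ · Mₙ₋₁ ⋯ M₁) > 0. -/

import Mathlib

/-!
Statement 8: positivity of the trace of the matrix product associated to the standard
M-path of a one-sided closed curve.
-/

open Matrix

/-- The descending product `M n * M (n-1) * ⋯ * M 1` (the identity for `n = 0`). -/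
def matProdDesc {F : Type*} [Field F] [LinearOrder F] [IsStrictOrderedRing F]
    (M : ℕ → Matrix (Fin 2) (Fin 2) F) : ℕ → Matrix (Fin 2) (Fin 2) F
  | 0 => 1
  | n + 1 => M (n + 1) * matProdDesc M n

lemma matProdDesc_pos {F : Type*} [Field F] [LinearOrder F] [IsStrictOrderedRing F]
    (M : ℕ → Matrix (Fin 2) (Fin 2) F) (n : ℕ)
    (hnonneg : ∀ i, 1 ≤ i → i ≤ n → ∀ a b : Fin 2, 0 ≤ M i a b)
    (hdiag : ∀ i, 1 ≤ i → i ≤ n → 0 < M i 0 0 ∧ 0 < M i 1 1) :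
    (∀ a b : Fin 2, 0 ≤ matProdDesc M n a b) ∧
      0 < matProdDesc M n 0 0 ∧ 0 < matProdDesc M n 1 1 := by
  induction n with
  | zero =>
      refine ⟨fun a b => ?_, by simp [matProdDesc], by simp [matProdDesc]⟩
      fin_cases a <;> fin_cases b <;> simp [matProdDesc, Matrix.one_apply]
  | succ n ih =>
      obtain ⟨hnn, h00, h11⟩ := ih
        (fun i h1 h2 => hnonneg i h1 (h2.trans (Nat.le_succ n)))
        (fun i h1 h2 => hdiag i h1 (h2.trans (Nat.le_succ n)))
      have hM : ∀ a b : Fin 2, 0 ≤ M (n + 1) a b :=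
        hnonneg (n + 1) (Nat.le_add_left 1 n) le_rfl
      have hMd := hdiag (n + 1) (Nat.le_add_left 1 n) le_rfl
      refine ⟨fun a b => ?_, ?_, ?_⟩
      · rw [matProdDesc, Matrix.mul_apply, Fin.sum_univ_two]
        exact add_nonneg (mul_nonneg (hM a 0) (hnn 0 b)) (mul_nonneg (hM a 1) (hnn 1 b))
      · rw [matProdDesc, Matrix.mul_apply, Fin.sum_univ_two]
        have := mul_pos hMd.1 h00
        have := mul_nonneg (hM 0 1) (hnn 1 0)
        linarith
      · rw [matProdDesc, Matrix.mul_apply, Fin.sum_univ_two]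
        have := mul_pos hMd.2 h11
        have := mul_nonneg (hM 1 0) (hnn 0 1)
        linarith

theorem trace_pos_of_triangular_factors {F : Type*} [Field F] [LinearOrder F] [IsStrictOrderedRing F]
    (n : ℕ) (M : ℕ → Matrix (Fin 2) (Fin 2) F)
    (htri : ∀ i, 1 ≤ i → i ≤ n → M i 1 0 = 0 ∨ M i 0 1 = 0)
    (hnonneg : ∀ i, 1 ≤ i → i ≤ n → ∀ a b : Fin 2, 0 ≤ M i a b)
    (hdiag : ∀ i, 1 ≤ i → i ≤ n → 0 < M i 0 0 ∧ 0 < M i 1 1)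
    (p q r : F) (hp : 0 < p) (hq : 0 < q) (hr : 0 < r) :
    0 < (!![p, q; r, 0] * matProdDesc M n).trace := by
  obtain ⟨hnn, h00, h11⟩ := matProdDesc_pos M n hnonneg hdiag
  rw [Matrix.trace_fin_two]
  simp [Matrix.mul_apply, Fin.sum_univ_two]
  have := mul_pos hp h00
  have := mul_nonneg hq.le (hnn 1 0)
  have := mul_nonneg hr.le (hnn 0 1)
  nlinarith
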